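/- arXiv:1507.07982 — 2 statements merged into one kernel-verified Lean document; each statement's English description precedes it below -/
import Mathlib

section
/- (Gradient-like on the collision manifold) Along any solution of the blown-up equations lying in the full collision manifold M₀ = {r = 0, H̃ = 0}, one has ν' = K_sh + ½J̃² ≥ 0, where K_sh = ½⟨y_hor, y_hor⟩ is the shape kinetic energy, J̃ = ⟨is,y⟩, and ν = ⟨s,y⟩. In particular ν is nondecreasing on M₀. -/
open Finset

/-- The mass inner product on `ℂ^N`. -/
noncomputable def massInner {N : ℕ} (m : Fin N → ℝ) (q v : Fin N → ℂ) : ℝ :=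
  ∑ a, m a * (q a * (starRingEnd ℂ) (v a)).re

lemma massInner_eq {N : ℕ} (m : Fin N → ℝ) (q v : Fin N → ℂ) :
    massInner m q v = ∑ a, m a * ((q a).re * (v a).re + (q a).im * (v a).im) := by
  unfold massInner
  refine Finset.sum_congr rfl fun a _ => ?_
  simp [Complex.mul_re]

lemma massInner_self_nonneg {N : ℕ} (m : Fin N → ℝ) (hm : ∀ a, 0 < m a)
    (q : Fin N → ℂ) : 0 ≤ massInner m q q := by
  rw [massInner_eq]
  refine Finset.sum_nonneg fun a _ => ?_
  have := (hm a).le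
  nlinarith [sq_nonneg (q a).re, sq_nonneg (q a).im]

lemma massInner_hor_expand {N : ℕ} (m : Fin N → ℝ) (S Y : Fin N → ℂ) (n J : ℝ) :
    massInner m (fun a => Y a - n • S a - J • (Complex.I * S a))
      (fun a => Y a - n • S a - J • (Complex.I * S a)) =
    massInner m Y Y - 2*n*massInner m S Y
      - 2*J*massInner m (fun a => Complex.I * S a) Y
      + (n^2+J^2)*massInner m S S := by
  simp only [massInner_eq, Finset.mul_sum, ← Finset.sum_sub_distrib, ← Finset.sum_add_distrib]
  refine Finset.sum_congr rfl fun a _ => ?_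
  simp [Complex.sub_re, Complex.sub_im, Complex.smul_re, Complex.smul_im,
    Complex.mul_re, Complex.mul_im]
  ring

lemma deriv_val_eq {N : ℕ} (m : Fin N → ℝ) (S Y G : Fin N → ℂ) (n c : ℝ) :
    (∑ a, m a * (((Y a - n • S a).re * (Y a).re + (S a).re * (G a + c • Y a).re)
        + ((Y a - n • S a).im * (Y a).im + (S a).im * (G a + c • Y a).im))) =
    massInner m Y Y - n * massInner m S Y + massInner m S G + c * massInner m S Y := by
  simp only [massInner_eq, Finset.mul_sum, ← Finset.sum_sub_distrib, ← Finset.sum_add_distrib]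
  refine Finset.sum_congr rfl fun a _ => ?_
  simp [Complex.sub_re, Complex.sub_im, Complex.add_re, Complex.add_im,
    Complex.smul_re, Complex.smul_im]
  ring

/-- Gradient-like behaviour on the full collision manifold
`M₀ = {r = 0, H̃ = 0}`: along any solution of the blown-up equations lying in
`M₀`, one has `ν' = K_sh + ½J̃² ≥ 0`; in particular `ν` is nondecreasing. -/
theorem nu_derivative_on_collision_manifold {N : ℕ}
    (m : Fin N → ℝ) (hm : ∀ a, 0 < m a)
    (U : (Fin N → ℂ) → ℝ) (gradU : (Fin N → ℂ) → (Fin N → ℂ))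
    (s y : ℝ → Fin N → ℂ) (ν Jt Ksh : ℝ → ℝ) (yhor : ℝ → Fin N → ℂ)
    (hν : ∀ τ, ν τ = massInner m (s τ) (y τ))
    (hJt : ∀ τ, Jt τ = massInner m (fun a => Complex.I * s τ a) (y τ))
    (hyhor : ∀ τ, yhor τ = fun a => y τ a - (ν τ) • s τ a
      - (Jt τ) • (Complex.I * s τ a))
    (hKsh : ∀ τ, Ksh τ = (1 / 2) * massInner m (yhor τ) (yhor τ))
    (hunit : ∀ τ, massInner m (s τ) (s τ) = 1)
    -- Euler identity and rotation invariance for the potential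
    (hEuler : ∀ τ, massInner m (s τ) (gradU (s τ)) = -U (s τ))
    (hrot : ∀ τ, massInner m (fun a => Complex.I * s τ a) (gradU (s τ)) = 0)
    -- the solution lies in the full collision manifold: `H̃ = 0`
    (hH : ∀ τ, (1 / 2) * massInner m (y τ) (y τ) - U (s τ) = 0)
    (hs : ∀ τ, HasDerivAt s (y τ - ν τ • s τ) τ)
    (hy : ∀ τ, HasDerivAt y (gradU (s τ) + ((1 / 2 : ℝ) * ν τ) • y τ) τ) :
    ∀ τ : ℝ,
      HasDerivAt (fun τ => massInner m (s τ) (y τ))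
        (Ksh τ + (1 / 2) * (Jt τ) ^ 2) τ ∧
      0 ≤ Ksh τ + (1 / 2) * (Jt τ) ^ 2 := by
  intro τ
  have hKnn : 0 ≤ Ksh τ := by
    rw [hKsh]
    have := massInner_self_nonneg m hm (yhor τ)
    linarith
  have hnn : 0 ≤ Ksh τ + (1 / 2) * (Jt τ) ^ 2 := by positivity
  refine ⟨?_, hnn⟩
  -- component derivatives
  have hsc : ∀ a : Fin N, HasDerivAt (fun τ => s τ a) (y τ a - ν τ • s τ a) τ := by
    intro a
    have := (ContinuousLinearMap.proj (R := ℝ) (φ := fun _ : Fin N => ℂ) a).hasFDerivAt.comp_hasDerivAt τ (hs τ)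
    simpa [Function.comp_def] using this
  have hyc : ∀ a : Fin N, HasDerivAt (fun τ => y τ a)
      (gradU (s τ) a + ((1 / 2 : ℝ) * ν τ) • y τ a) τ := by
    intro a
    have := (ContinuousLinearMap.proj (R := ℝ) (φ := fun _ : Fin N => ℂ) a).hasFDerivAt.comp_hasDerivAt τ (hy τ)
    simpa [Function.comp_def] using this
  have hre : ∀ (f : ℝ → ℂ) (f' : ℂ), HasDerivAt f f' τ →
      HasDerivAt (fun t => (f t).re) f'.re τ := fun f f' hf =>
    Complex.reCLM.hasFDerivAt.comp_hasDerivAt τ hf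
  have him : ∀ (f : ℝ → ℂ) (f' : ℂ), HasDerivAt f f' τ →
      HasDerivAt (fun t => (f t).im) f'.im τ := fun f f' hf =>
    Complex.imCLM.hasFDerivAt.comp_hasDerivAt τ hf
  set G := gradU (s τ) with hG
  set c : ℝ := (1 / 2 : ℝ) * ν τ with hc
  have hsum : HasDerivAt (fun τ => ∑ a, m a * ((s τ a).re * (y τ a).re + (s τ a).im * (y τ a).im))
      (∑ a, m a * (((y τ a - ν τ • s τ a).re * (y τ a).re + (s τ a).re * (G a + c • y τ a).re)
        + ((y τ a - ν τ • s τ a).im * (y τ a).im + (s τ a).im * (G a + c • y τ a).im))) τ := by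
    refine HasDerivAt.fun_sum fun a _ => ?_
    exact (((hre _ _ (hsc a)).mul (hre _ _ (hyc a))).add
      ((him _ _ (hsc a)).mul (him _ _ (hyc a)))).const_mul (m a)
  have hfun : (fun τ => massInner m (s τ) (y τ))
      = fun τ => ∑ a, m a * ((s τ a).re * (y τ a).re + (s τ a).im * (y τ a).im) :=
    funext fun τ => massInner_eq m (s τ) (y τ)
  rw [hfun]
  -- identify the derivative value
  have hval : (∑ a, m a * (((y τ a - ν τ • s τ a).re * (y τ a).re + (s τ a).re * (G a + c • y τ a).re)
        + ((y τ a - ν τ • s τ a).im * (y τ a).im + (s τ a).im * (G a + c • y τ a).im)))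
      = Ksh τ + (1 / 2) * (Jt τ) ^ 2 := by
    rw [deriv_val_eq m (s τ) (y τ) G (ν τ) c]
    have h1 : massInner m (s τ) (y τ) = ν τ := (hν τ).symm
    have h2 : massInner m (s τ) G = -U (s τ) := hEuler τ
    have h3 : U (s τ) = (1 / 2) * massInner m (y τ) (y τ) := by linarith [hH τ]
    have h4 : Ksh τ = (1 / 2) * (massInner m (y τ) (y τ) - 2 * ν τ * ν τ
        - 2 * Jt τ * Jt τ + ((ν τ)^2 + (Jt τ)^2)) := by
      rw [hKsh τ, hyhor τ, massInner_hor_expand m (s τ) (y τ) (ν τ) (Jt τ),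
        hunit τ, ← h1, ← hJt τ]
      ring
    rw [h1, h2, h3, hc]
    rw [h4]; ring
  rw [← hval]
  exact hsum
end

section
/- If a solution (s(τ), y(τ)) of the blown-up equations on the collision manifold {r=0, H̃=0} satisfies ν' ≡ 0 (equivalently K_sh ≡ 0 and J̃ ≡ 0), then it is an equilibrium: y(τ) = ν s(τ) with ν constant, s constant a central configuration, and ν² = 2U(s). -/
open Finset

/-- Rigidity on the collision manifold: if a solution `(s(τ),y(τ))` of the
blown-up equations on `{r = 0, H̃ = 0}` satisfies `K_sh ≡ 0` and `J̃ ≡ 0`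
(equivalently `ν' ≡ 0`), then it is an equilibrium: `y = νs` with `ν` constant,
`s` constant and a central configuration, and `ν² = 2U(s)`. -/
theorem equilibrium_of_nu_critical {N : ℕ}
    (m : Fin N → ℝ) (hm : ∀ a, 0 < m a)
    (U : (Fin N → ℂ) → ℝ) (gradU : (Fin N → ℂ) → (Fin N → ℂ))
    (s y : ℝ → Fin N → ℂ) (ν Jt Ksh : ℝ → ℝ) (yhor : ℝ → Fin N → ℂ)
    (hν : ∀ τ, ν τ = massInner m (s τ) (y τ))
    (hJt : ∀ τ, Jt τ = massInner m (fun a => Complex.I * s τ a) (y τ))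
    (hyhor : ∀ τ, yhor τ = fun a => y τ a - (ν τ) • s τ a
      - (Jt τ) • (Complex.I * s τ a))
    (hKsh : ∀ τ, Ksh τ = (1 / 2) * massInner m (yhor τ) (yhor τ))
    (hunit : ∀ τ, massInner m (s τ) (s τ) = 1)
    (hEuler : ∀ τ, massInner m (s τ) (gradU (s τ)) = -U (s τ))
    -- the solution lies in `{H̃ = 0}`
    (hH : ∀ τ, (1 / 2) * massInner m (y τ) (y τ) - U (s τ) = 0)
    (hs : ∀ τ, HasDerivAt s (y τ - ν τ • s τ) τ)
    (hy : ∀ τ, HasDerivAt y (gradU (s τ) + ((1 / 2 : ℝ) * ν τ) • y τ) τ)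
    -- hypothesis: `ν' ≡ 0`, equivalently `K_sh ≡ 0` and `J̃ ≡ 0`
    (hKsh0 : ∀ τ, Ksh τ = 0) (hJt0 : ∀ τ, Jt τ = 0) :
    (∀ τ : ℝ, y τ = ν τ • s τ) ∧
    (∀ τ₁ τ₂ : ℝ, ν τ₁ = ν τ₂) ∧
    (∀ τ₁ τ₂ : ℝ, s τ₁ = s τ₂) ∧
    (∀ τ : ℝ, gradU (s τ) = (-U (s τ)) • s τ) ∧
    (∀ τ : ℝ, (ν τ) ^ 2 = 2 * U (s τ)) := by
  -- Step 1: y = ν • s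
  have hy0 : ∀ τ : ℝ, y τ = ν τ • s τ := by
    intro τ
    have h1 : massInner m (yhor τ) (yhor τ) = 0 := by
      have h := hKsh τ; rw [hKsh0 τ] at h; linarith
    have h2 : ∀ a, yhor τ a = 0 := by
      intro a
      have hsum : ∑ b, m b * Complex.normSq (yhor τ b) = 0 := by
        rw [← h1]; unfold massInner
        refine Finset.sum_congr rfl fun b _ => ?_
        rw [Complex.mul_conj]; simp
      have hterm := (Finset.sum_eq_zero_iff_of_nonneg (fun b _ =>
        mul_nonneg (hm b).le (Complex.normSq_nonneg _))).mp hsum a (Finset.mem_univ a)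
      have := (mul_eq_zero.mp hterm).resolve_left (ne_of_gt (hm a))
      exact Complex.normSq_eq_zero.mp this
    funext a
    have h3 := h2 a
    rw [hyhor τ] at h3
    simp only [hJt0 τ, zero_smul, sub_zero] at h3
    have := sub_eq_zero.mp h3
    simpa using this
  -- Step 2: s' = 0, s constant
  have hs0 : ∀ τ : ℝ, HasDerivAt s 0 τ := by
    intro τ
    have h := hs τ
    rwa [hy0 τ, sub_self] at h
  have hsc : ∀ τ₁ τ₂ : ℝ, s τ₁ = s τ₂ := by
    intro τ₁ τ₂
    apply is_const_of_fderiv_eq_zero (𝕜 := ℝ) (fun τ => (hs0 τ).differentiableAt)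
    intro τ
    have := (hs0 τ).hasFDerivAt.fderiv
    rw [this]; ext v; simp
  -- Step 3: ν² = 2U(s)
  have hν2 : ∀ τ : ℝ, (ν τ) ^ 2 = 2 * U (s τ) := by
    intro τ
    have hyy : massInner m (y τ) (y τ) = (ν τ) ^ 2 := by
      have : massInner m (y τ) (y τ) = (ν τ)^2 * massInner m (s τ) (s τ) := by
        unfold massInner
        rw [Finset.mul_sum]
        refine Finset.sum_congr rfl fun a _ => ?_
        rw [hy0 τ]
        simp only [Pi.smul_apply, Complex.real_smul, map_mul, Complex.conj_ofReal]
        rw [show (↑(ν τ) * s τ a * (↑(ν τ) * (starRingEnd ℂ) (s τ a)))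
            = ((↑((ν τ)^2) : ℂ)) * (s τ a * (starRingEnd ℂ) (s τ a)) by
          push_cast; ring]
        rw [Complex.re_ofReal_mul]; ring
      rw [this, hunit τ, mul_one]
    have h := hH τ
    rw [hyy] at h; linarith
  -- Step 4: ν constant
  have hνd : ∀ τ : ℝ, HasDerivAt ν 0 τ := by
    intro τ
    have hνf : ν = fun τ => ∑ a, m a * (s τ a * (starRingEnd ℂ) (y τ a)).re :=
      funext fun τ => hν τ
    rw [hνf]
    have hterm : ∀ a ∈ Finset.univ (α := Fin N),
        HasDerivAt (fun τ => m a * (s τ a * (starRingEnd ℂ) (y τ a)).re)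
          (m a * (s τ a * (starRingEnd ℂ) ((gradU (s τ) + ((1 / 2 : ℝ) * ν τ) • y τ) a)).re) τ := by
      intro a _
      have hsa : HasDerivAt (fun τ => s τ a) 0 τ := by
        have := hasDerivAt_pi.mp (hs0 τ) a
        simpa using this
      have hya : HasDerivAt (fun τ => y τ a)
          ((gradU (s τ) + ((1 / 2 : ℝ) * ν τ) • y τ) a) τ :=
        hasDerivAt_pi.mp (hy τ) a
      have hmul : HasDerivAt (fun τ => s τ a * (starRingEnd ℂ) (y τ a))
          (0 * (starRingEnd ℂ) (y τ a)
            + s τ a * (starRingEnd ℂ) ((gradU (s τ) + ((1 / 2 : ℝ) * ν τ) • y τ) a)) τ :=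
        hsa.mul hya.star
      have hre := (Complex.reCLM.hasFDerivAt.comp_hasDerivAt τ hmul).const_mul (m a)
      simpa using hre
    have hsum := HasDerivAt.fun_sum hterm
    have hval : ∑ a, m a * (s τ a * (starRingEnd ℂ)
        ((gradU (s τ) + ((1 / 2 : ℝ) * ν τ) • y τ) a)).re = 0 := by
      have hsplit : ∀ a : Fin N,
          m a * (s τ a * (starRingEnd ℂ) ((gradU (s τ) + ((1 / 2 : ℝ) * ν τ) • y τ) a)).re
          = m a * (s τ a * (starRingEnd ℂ) (gradU (s τ) a)).re
            + (1 / 2 * ν τ) * (m a * (s τ a * (starRingEnd ℂ) (y τ a)).re) := by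
        intro a
        simp only [Pi.add_apply, Pi.smul_apply, Complex.real_smul, map_add, map_mul,
          Complex.conj_ofReal, mul_add]
        rw [show s τ a * (↑(1 / 2 * ν τ) * (starRingEnd ℂ) (y τ a))
            = (↑(1 / 2 * ν τ) : ℂ) * (s τ a * (starRingEnd ℂ) (y τ a)) by ring]
        rw [Complex.add_re, Complex.re_ofReal_mul]; ring
      rw [Finset.sum_congr rfl (fun a _ => hsplit a), Finset.sum_add_distrib,
        ← Finset.mul_sum]
      have h1 : ∑ a, m a * (s τ a * (starRingEnd ℂ) (gradU (s τ) a)).re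
          = -U (s τ) := hEuler τ
      have h2 : ∑ a, m a * (s τ a * (starRingEnd ℂ) (y τ a)).re = ν τ := (hν τ).symm
      rw [h1, h2]
      have := hν2 τ
      nlinarith [hν2 τ]
    rw [hval] at hsum
    exact hsum
  have hνc : ∀ τ₁ τ₂ : ℝ, ν τ₁ = ν τ₂ := by
    intro τ₁ τ₂
    apply is_const_of_deriv_eq_zero (fun τ => (hνd τ).differentiableAt)
    intro τ; exact (hνd τ).deriv
  -- Step 5: gradU(s) = -U(s) • s
  have hyconst : ∀ τ : ℝ, y τ = ν 0 • s 0 := by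
    intro τ; rw [hy0 τ, hνc τ 0, hsc τ 0]
  have hgrad : ∀ τ : ℝ, gradU (s τ) = (-U (s τ)) • s τ := by
    intro τ
    have hyd : HasDerivAt y 0 τ := by
      have : y = fun _ => ν 0 • s 0 := funext hyconst
      rw [this]; exact hasDerivAt_const τ _
    have huniq := (hy τ).unique hyd
    have : gradU (s τ) = -(((1 / 2 : ℝ) * ν τ) • y τ) := by
      rw [eq_neg_iff_add_eq_zero]; exact huniq
    rw [this, hy0 τ, smul_smul]
    rw [show -((1 / 2 * ν τ * ν τ) • s τ) = (-(1/2 * ν τ * ν τ)) • s τ by rw [neg_smul]]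
    congr 1
    have := hν2 τ
    nlinarith
  exact ⟨hy0, hνc, hsc, hgrad, hν2⟩
end
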